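/- Evaluation of the Chio measure on four-entry specifications (recipe H4): Let n ≥ 2, let I ⊆ {1,…,n−1}² with |I| = 4, and let B : I → {−1,0,+1}. If it is not the case that I is a matrix-4-circuit (i.e. I = {i,i'}×{j,j'} for some 1 ≤ i < i' ≤ n−1 and 1 ≤ j < j' ≤ n−1) with all four values of B nonzero, then P_chio[E_B^{[n−1]²}] = P_lcf[E_B^{[n−1]²}] = (1/2)^{|I| + |Supp(B)|}. If I = {i,i'}×{j,j'} and B takes values in {−1,+1}, then: if the product B(i,j)·B(i,j')·B(i',j)·B(i',j') = −1 (equivalently, an odd number of the four values equal +1), then P_chio[E_B^{[n−1]²}] = 0; and if the product equals +1, then P_chio[E_B^{[n−1]²}] = (1/2)^7 = 2 · P_lcf[E_B^{[n−1]²}]. -/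

import Mathlib

/-- The grid of index positions `{1,…,s-1} × {1,…,t-1}`. -/
def mgrid (s t : ℕ) : Finset (ℕ × ℕ) := Finset.Icc 1 (s - 1) ×ˢ Finset.Icc 1 (t - 1)

/-- The Chio extension `J̆` of a set `J` of positions:
`J̆ = {(s,t)} ∪ {(i,t) : i ∈ p1(J)} ∪ {(s,j) : j ∈ p2(J)} ∪ J`. -/
def chioExt (s t : ℕ) (J : Finset (ℕ × ℕ)) : Finset (ℕ × ℕ) :=
  insert (s, t) (((J.image Prod.fst).image fun i => (i, t)) ∪
    ((J.image Prod.snd).image fun j => (s, j)) ∪ J)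

/-- `A` condenses to `B` on `I`:
`A(i,j)·A(s,t) − A(i,t)·A(s,j) = 2·B(i,j)` for every `(i,j) ∈ I`. -/
def CondensesTo (s t : ℕ) (I : Finset (ℕ × ℕ)) (A B : ℕ × ℕ → ℤ) : Prop :=
  ∀ p ∈ I, A p * A (s, t) - A (p.1, t) * A (s, p.2) = 2 * B p

/-- `A` encodes a function `E → {−1,+1}`: it takes values `±1` on `E` and is
normalized to `1` off `E`. -/
def IsSignOn (E : Finset (ℕ × ℕ)) (A : ℕ × ℕ → ℤ) : Prop :=
  (∀ p ∈ E, A p = 1 ∨ A p = -1) ∧ ∀ p ∉ E, A p = 1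

/-- First projection `p1(I)` of a set of positions. -/
def proj1 (I : Finset (ℕ × ℕ)) : Finset ℕ := I.image Prod.fst

/-- Second projection `p2(I)` of a set of positions. -/
def proj2 (I : Finset (ℕ × ℕ)) : Finset ℕ := I.image Prod.snd

/-- The vertex set of the bipartite graph `X_B`: a copy `Sum.inl i` of each row index
`i ∈ p1(I)` and a copy `Sum.inr j` of each column index `j ∈ p2(I)`. -/
def vertSet (I : Finset (ℕ × ℕ)) : Finset (ℕ ⊕ ℕ) :=
  (proj1 I).image Sum.inl ∪ (proj2 I).image Sum.inr

/-- `f0(X_B) = |p1(I)| + |p2(I)|`, the number of vertices of `X_B`. -/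
def fZero (I : Finset (ℕ × ℕ)) : ℕ := (proj1 I).card + (proj2 I).card

/-- The full grid `{1,…,n} × {1,…,n}` (the domain of the uncondensed sign matrices). -/
def fullGrid (n : ℕ) : Finset (ℕ × ℕ) := Finset.Icc 1 n ×ˢ Finset.Icc 1 n

/-- `P_chio[E_B^{[n−1]²}] = 2^{−n²} · |{A : {1,…,n}² → {±1} : A condenses to B}|`. -/
noncomputable def PchioN (n : ℕ) (I : Finset (ℕ × ℕ)) (B : ℕ × ℕ → ℤ) : ℚ :=
  (Set.ncard {A : ℕ × ℕ → ℤ | IsSignOn (fullGrid n) A ∧ CondensesTo n n I A B} : ℚ) /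
    2 ^ (n ^ 2)

/-- `P_lcf[E_B^{[n−1]²}] = (1/2)^{|I| + |Supp(B)|}` where `Supp(B) = {p ∈ I : B p ≠ 0}`. -/
def PlcfN (I : Finset (ℕ × ℕ)) (B : ℕ × ℕ → ℤ) : ℚ :=
  (1 / 2 : ℚ) ^ (I.card + (I.filter fun p => B p ≠ 0).card)


open Finset Function

noncomputable def cnt (E : Finset (ℕ × ℕ)) (P : ((ℕ × ℕ) → ℤ) → Prop) : ℕ :=
  Set.ncard {A | IsSignOn E A ∧ P A}

noncomputable def signFinset (E : Finset (ℕ × ℕ)) : Finset ((ℕ × ℕ) → ℤ) :=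
  letI := Classical.decEq ((ℕ × ℕ) → ℤ)
  (E.pi fun _ => ({1, -1} : Finset ℤ)).image fun f p => if h : p ∈ E then f p h else 1

lemma mem_signFinset {E : Finset (ℕ × ℕ)} {A : (ℕ × ℕ) → ℤ} :
    A ∈ signFinset E ↔ IsSignOn E A := by
  classical
  constructor
  · rintro h
    simp only [signFinset, mem_image, mem_pi] at h
    obtain ⟨f, hf, rfl⟩ := h
    constructor
    · intro p hp
      have := hf p hp
      simp only [mem_insert, mem_singleton] at this
      simp only [hp, dif_pos]
      exact this
    · intro p hp; simp [hp]
  · rintro ⟨h1, h2⟩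
    simp only [signFinset, mem_image, mem_pi]
    refine ⟨fun p _ => A p, fun p hp => ?_, ?_⟩
    · simpa [mem_insert, mem_singleton] using h1 p hp
    · funext p
      by_cases hp : p ∈ E
      · simp [hp]
      · simp [hp, h2 p hp]

lemma finite_signOn (E : Finset (ℕ × ℕ)) : {A | IsSignOn E A}.Finite := by
  have : {A | IsSignOn E A} = ↑(signFinset E) := by
    ext A; simp [mem_signFinset]
  rw [this]; exact (signFinset E).finite_toSet

lemma card_signFinset (E : Finset (ℕ × ℕ)) : (signFinset E).card = 2 ^ E.card := by
  classical
  rw [signFinset]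
  rw [Finset.card_image_of_injOn, Finset.card_pi]
  · simp
  · intro f hf g hg hfg
    simp only [mem_coe, mem_pi] at hf hg
    funext p hp
    have := congrFun hfg p
    simpa [hp] using this

lemma cnt_congr {E : Finset (ℕ × ℕ)} {P Q : ((ℕ × ℕ) → ℤ) → Prop}
    (h : ∀ A, IsSignOn E A → (P A ↔ Q A)) : cnt E P = cnt E Q := by
  unfold cnt
  congr 1
  ext A
  exact and_congr_right fun hA => h A hA

lemma cnt_true (E : Finset (ℕ × ℕ)) : cnt E (fun _ => True) = 2 ^ E.card := by
  unfold cnt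
  have : {A | IsSignOn E A ∧ True} = ↑(signFinset E) := by
    ext A; simp [mem_signFinset]
  rw [this, Set.ncard_coe_finset, card_signFinset]

lemma signOn_update_one {E : Finset (ℕ × ℕ)} {q : ℕ × ℕ} {A : (ℕ × ℕ) → ℤ}
    (hA : IsSignOn (insert q E) A) (hq : q ∉ E) : IsSignOn E (update A q 1) := by
  constructor
  · intro p hp
    rcases eq_or_ne p q with rfl | hne
    · exact absurd hp hq
    · rw [update_of_ne hne]; exact hA.1 p (mem_insert_of_mem hp)
  · intro p hp
    rcases eq_or_ne p q with rfl | hne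
    · simp
    · rw [update_of_ne hne]; exact hA.2 p (by simp [hne, hp])

lemma signOn_update_insert {E : Finset (ℕ × ℕ)} {q : ℕ × ℕ} {A : (ℕ × ℕ) → ℤ} {v : ℤ}
    (hA : IsSignOn E A) (hv : v = 1 ∨ v = -1) : IsSignOn (insert q E) (update A q v) := by
  constructor
  · intro p hp
    rcases eq_or_ne p q with rfl | hne
    · rw [update_self]; exact hv
    · rw [update_of_ne hne]
      exact hA.1 p (by rcases mem_insert.1 hp with h | h; exacts [absurd h hne, h])
  · intro p hp
    have hne : p ≠ q := fun h => hp (h ▸ mem_insert_self q E)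
    rw [update_of_ne hne]
    exact hA.2 p (fun h => hp (mem_insert_of_mem h))

lemma cnt_det {E : Finset (ℕ × ℕ)} {q : ℕ × ℕ} (hq : q ∉ E)
    {P Q : ((ℕ × ℕ) → ℤ) → Prop} {g : ((ℕ × ℕ) → ℤ) → ℤ}
    (hQ : ∀ A v, Q (update A q v) ↔ Q A)
    (hg : ∀ A v, g (update A q v) = g A)
    (hPQ : ∀ A, IsSignOn (insert q E) A → (P A ↔ (Q A ∧ A q = g A)))
    (hgv : ∀ A, IsSignOn E A → Q A → g A = 1 ∨ g A = -1) :
    cnt (insert q E) P = cnt E Q := by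
  unfold cnt
  have himg : {A | IsSignOn (insert q E) A ∧ P A}
      = (fun A => update A q (g A)) '' {A | IsSignOn E A ∧ Q A} := by
    ext A
    constructor
    · rintro ⟨hA, hP⟩
      obtain ⟨hQA, hAq⟩ := (hPQ A hA).1 hP
      refine ⟨update A q 1, ⟨signOn_update_one hA hq, (hQ A 1).2 hQA⟩, ?_⟩
      show update (update A q 1) q (g (update A q 1)) = A
      rw [hg A 1, update_idem, ← hAq, update_eq_self]
    · rintro ⟨A₀, ⟨hA₀, hQ₀⟩, rfl⟩
      have hgv₀ := hgv A₀ hA₀ hQ₀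
      have hsign : IsSignOn (insert q E) (update A₀ q (g A₀)) :=
        signOn_update_insert hA₀ hgv₀
      refine ⟨hsign, (hPQ _ hsign).2 ⟨(hQ A₀ _).2 hQ₀, ?_⟩⟩
      rw [update_self, hg]
  rw [himg]
  apply Set.ncard_image_of_injOn
  intro A hA A' hA' heq
  have h1 : A q = 1 := hA.1.2 q hq
  have h1' : A' q = 1 := hA'.1.2 q hq
  funext p
  rcases eq_or_ne p q with rfl | hne
  · rw [h1, h1']
  · have := congrFun heq p
    simpa [update_of_ne hne] using this

lemma cnt_free {E : Finset (ℕ × ℕ)} {q : ℕ × ℕ} (hq : q ∉ E)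
    {P : ((ℕ × ℕ) → ℤ) → Prop}
    (hP : ∀ A v, P (update A q v) ↔ P A) :
    cnt (insert q E) P = 2 * cnt E P := by
  unfold cnt
  have hsplit : {A | IsSignOn (insert q E) A ∧ P A}
      = (fun A => update A q 1) '' {A | IsSignOn E A ∧ P A}
        ∪ (fun A => update A q (-1)) '' {A | IsSignOn E A ∧ P A} := by
    ext A
    constructor
    · rintro ⟨hA, hPA⟩
      have hAq : A q = 1 ∨ A q = -1 := hA.1 q (mem_insert_self q E)
      have hmem : update A q 1 ∈ {A | IsSignOn E A ∧ P A} :=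
        ⟨signOn_update_one hA hq, (hP A 1).2 hPA⟩
      rcases hAq with h | h
      · left
        refine ⟨update A q 1, hmem, ?_⟩
        show update (update A q 1) q 1 = A
        rw [update_idem, ← h, update_eq_self]
      · right
        refine ⟨update A q 1, hmem, ?_⟩
        show update (update A q 1) q (-1) = A
        rw [update_idem, ← h, update_eq_self]
    · rintro (⟨A₀, ⟨hA₀, hP₀⟩, rfl⟩ | ⟨A₀, ⟨hA₀, hP₀⟩, rfl⟩)
      · exact ⟨signOn_update_insert hA₀ (Or.inl rfl), (hP A₀ 1).2 hP₀⟩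
      · exact ⟨signOn_update_insert hA₀ (Or.inr rfl), (hP A₀ (-1)).2 hP₀⟩
  have hfin : {A | IsSignOn E A ∧ P A}.Finite :=
    (finite_signOn E).subset (fun A hA => hA.1)
  have hinj : ∀ v : ℤ, Set.InjOn (fun A => update A q v) {A | IsSignOn E A ∧ P A} := by
    intro v A hA A' hA' heq
    have h1 : A q = 1 := hA.1.2 q hq
    have h1' : A' q = 1 := hA'.1.2 q hq
    funext p
    rcases eq_or_ne p q with rfl | hne
    · rw [h1, h1']
    · have := congrFun heq p
      simpa [update_of_ne hne] using this
  have hdisj : Disjoint ((fun A => update A q 1) '' {A | IsSignOn E A ∧ P A})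
      ((fun A => update A q (-1)) '' {A | IsSignOn E A ∧ P A}) := by
    rw [Set.disjoint_left]
    rintro A ⟨A₀, _, rfl⟩ ⟨A₁, _, hA₁⟩
    have := congrFun hA₁ q
    simp at this
  rw [hsplit, Set.ncard_union_eq hdisj (hfin.image _) (hfin.image _),
    Set.ncard_image_of_injOn (hinj 1), Set.ncard_image_of_injOn (hinj (-1))]
  ring

lemma cnt_free_set {F E : Finset (ℕ × ℕ)} (hdisj : Disjoint F E)
    {P : ((ℕ × ℕ) → ℤ) → Prop}
    (hP : ∀ q ∈ F, ∀ A v, P (update A q v) ↔ P A) :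
    cnt (F ∪ E) P = 2 ^ F.card * cnt E P := by
  classical
  induction F using Finset.induction with
  | empty => simp
  | @insert a F ha ih =>
    have hd : Disjoint F E := Finset.disjoint_of_subset_left (Finset.subset_insert a F) hdisj
    have haE : a ∉ F ∪ E := by
      simp only [Finset.mem_union, not_or]
      exact ⟨ha, Finset.disjoint_left.1 hdisj (mem_insert_self a F)⟩
    rw [Finset.insert_union, cnt_free haE (hP a (mem_insert_self a F)),
      ih hd (fun q hq => hP q (mem_insert_of_mem hq)), Finset.card_insert_of_notMem ha]
    ring

lemma sq_one {x : ℤ} (hx : x = 1 ∨ x = -1) : x * x = 1 := by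
  rcases hx with rfl | rfl <;> norm_num

lemma rowcol_card {n : ℕ} (R C : Finset ℕ)
    (hR : R ⊆ Finset.Icc 1 (n-1)) (hC : C ⊆ Finset.Icc 1 (n-1)) (hn : 1 ≤ n) :
    (R.image (fun i => (i, n)) ∪ C.image (fun j => (n, j)) : Finset (ℕ × ℕ)).card
      = R.card + C.card := by
  rw [Finset.card_union_of_disjoint, Finset.card_image_of_injective _ (fun a b h => (Prod.mk.injEq _ _ _ _ ▸ h : _ ∧ _).1),
    Finset.card_image_of_injective _ (fun a b h => (Prod.mk.injEq _ _ _ _ ▸ h : _ ∧ _).2)]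
  rw [Finset.disjoint_left]
  rintro ⟨x, y⟩ hx hy
  simp only [Finset.mem_image, Prod.mk.injEq] at hx hy
  obtain ⟨a, ha, rfl, rfl⟩ := hx
  obtain ⟨b, hb, h1, h2⟩ := hy
  have := (Finset.mem_Icc.1 (hR ha)).2
  omega


lemma pne1 {a b c d : ℕ} (h : a ≠ c) : (a, b) ≠ (c, d) :=
  fun heq => h (congrArg Prod.fst heq)

lemma pne2 {a b c d : ℕ} (h : b ≠ d) : (a, b) ≠ (c, d) :=
  fun heq => h (congrArg Prod.snd heq)


lemma leaf_exists (S : Finset (ℕ × ℕ)) (hne : S.Nonempty) (hcard : S.card ≤ 4)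
    (hrect : ¬ ∃ i i' j j', i ≠ i' ∧ j ≠ j' ∧
      ({(i,j), (i,j'), (i',j), (i',j')} : Finset (ℕ × ℕ)) ⊆ S) :
    ∃ e ∈ S, e.1 ∉ (S.erase e).image Prod.fst ∨ e.2 ∉ (S.erase e).image Prod.snd := by
  by_contra h
  push_neg at h
  set R := S.image Prod.fst with hR
  set C := S.image Prod.snd with hC
  have hfibR : ∀ i ∈ R, 2 ≤ (S.filter fun e => e.1 = i).card := by
    intro i hi
    obtain ⟨e, he, rfl⟩ := Finset.mem_image.1 hi
    obtain ⟨e', he'⟩ := Finset.mem_image.1 (h e he).1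
    obtain ⟨he'S, h1⟩ := he'
    exact Finset.one_lt_card.2 ⟨e, Finset.mem_filter.2 ⟨he, rfl⟩, e',
      Finset.mem_filter.2 ⟨Finset.mem_of_mem_erase he'S, h1⟩,
      fun hee => (Finset.ne_of_mem_erase he'S) (hee ▸ rfl)⟩
  have hfibC : ∀ j ∈ C, 2 ≤ (S.filter fun e => e.2 = j).card := by
    intro j hj
    obtain ⟨e, he, rfl⟩ := Finset.mem_image.1 hj
    obtain ⟨e', he'⟩ := Finset.mem_image.1 (h e he).2
    obtain ⟨he'S, h1⟩ := he'
    exact Finset.one_lt_card.2 ⟨e, Finset.mem_filter.2 ⟨he, rfl⟩, e',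
      Finset.mem_filter.2 ⟨Finset.mem_of_mem_erase he'S, h1⟩,
      fun hee => (Finset.ne_of_mem_erase he'S) (hee ▸ rfl)⟩
  have hsumR : S.card = ∑ i ∈ R, (S.filter fun e => e.1 = i).card :=
    Finset.card_eq_sum_card_fiberwise (fun e he => Finset.mem_image_of_mem _ he)
  have hsumC : S.card = ∑ j ∈ C, (S.filter fun e => e.2 = j).card :=
    Finset.card_eq_sum_card_fiberwise (fun e he => Finset.mem_image_of_mem _ he)
  have hRle : 2 * R.card ≤ S.card := by
    rw [hsumR]
    calc 2 * R.card = ∑ _i ∈ R, 2 := by rw [Finset.sum_const, smul_eq_mul]; ring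
    _ ≤ _ := Finset.sum_le_sum hfibR
  have hCle : 2 * C.card ≤ S.card := by
    rw [hsumC]
    calc 2 * C.card = ∑ _j ∈ C, 2 := by rw [Finset.sum_const, smul_eq_mul]; ring
    _ ≤ _ := Finset.sum_le_sum hfibC
  have hsub : S ⊆ R ×ˢ C := fun e he =>
    Finset.mem_product.2 ⟨Finset.mem_image_of_mem _ he, Finset.mem_image_of_mem _ he⟩
  have hSle : S.card ≤ R.card * C.card := by
    simpa [Finset.card_product] using Finset.card_le_card hsub
  have hRne : 1 ≤ R.card := Finset.card_pos.2 (hne.image _)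
  have hCne : 1 ≤ C.card := Finset.card_pos.2 (hne.image _)
  have hR2 : R.card = 2 ∧ C.card = 2 ∧ S.card = 4 := by
    have h1 : R.card ≤ 2 := by omega
    have h2 : C.card ≤ 2 := by omega
    interval_cases hr : R.card <;> interval_cases hc : C.card <;> omega
  obtain ⟨hr2, hc2, hs4⟩ := hR2
  have hSeq : S = R ×ˢ C := Finset.eq_of_subset_of_card_le hsub
    (by rw [Finset.card_product, hr2, hc2, hs4])
  obtain ⟨i, i', hii, hRe⟩ := Finset.card_eq_two.1 hr2
  obtain ⟨j, j', hjj, hCe⟩ := Finset.card_eq_two.1 hc2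
  refine hrect ⟨i, i', j, j', hii, hjj, ?_⟩
  intro p hp
  rw [hSeq, hRe, hCe]
  simp only [Finset.mem_insert, Finset.mem_singleton] at hp
  rcases hp with rfl | rfl | rfl | rfl <;> simp

lemma Vcount (n : ℕ) (hn : 1 ≤ n) (m : ℕ) (hm : m ≤ 4) :
    ∀ (S : Finset (ℕ × ℕ)) (R C : Finset ℕ) (σ : ℕ × ℕ → ℤ),
    S.card ≤ m → (∀ e ∈ S, σ e = 1 ∨ σ e = -1) → S ⊆ R ×ˢ C →
    R ⊆ Finset.Icc 1 (n-1) → C ⊆ Finset.Icc 1 (n-1) →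
    (¬ ∃ i i' j j', i ≠ i' ∧ j ≠ j' ∧
      ({(i,j), (i,j'), (i',j), (i',j')} : Finset (ℕ × ℕ)) ⊆ S) →
    2 ^ S.card * cnt (R.image (fun i => (i, n)) ∪ C.image (fun j => (n, j)))
      (fun A => ∀ e ∈ S, A (e.1, n) * A (n, e.2) = σ e)
    = 2 ^ (R.card + C.card) := by
  induction m with
  | zero =>
    intro S R C σ hScard hσ hSRC hR hC hrect
    have hS : S = ∅ := Finset.card_eq_zero.1 (Nat.le_zero.1 hScard)
    subst hS
    rw [cnt_congr (Q := fun _ => True) (fun A _ => by simp), cnt_true,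
      rowcol_card R C hR hC hn]
    simp
  | succ m ih =>
    intro S R C σ hScard hσ hSRC hR hC hrect
    rcases Finset.eq_empty_or_nonempty S with rfl | hne
    · rw [cnt_congr (Q := fun _ => True) (fun A _ => by simp), cnt_true,
        rowcol_card R C hR hC hn]
      simp
    obtain ⟨e, heS, hleaf⟩ := leaf_exists S hne (by omega) hrect
    have heR : e.1 ∈ R := (Finset.mem_product.1 (hSRC heS)).1
    have heC : e.2 ∈ C := (Finset.mem_product.1 (hSRC heS)).2
    have he1 : e.1 ≤ n - 1 := (Finset.mem_Icc.1 (hR heR)).2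
    have he2 : e.2 ≤ n - 1 := (Finset.mem_Icc.1 (hC heC)).2
    have hrect' : ¬ ∃ i i' j j', i ≠ i' ∧ j ≠ j' ∧
        ({(i,j), (i,j'), (i',j), (i',j')} : Finset (ℕ × ℕ)) ⊆ S.erase e := by
      rintro ⟨i, i', j, j', h1, h2, h3⟩
      exact hrect ⟨i, i', j, j', h1, h2, h3.trans (Finset.erase_subset _ _)⟩
    have hScard' : S.card = (S.erase e).card + 1 :=
      (Finset.card_erase_add_one heS).symm
    rcases hleaf with hleaf | hleaf
    · -- row leaf : peel q = (e.1, n)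
      have hins : insert (e.1, n) ((R.erase e.1).image (fun i => (i, n))
            ∪ C.image (fun j => (n, j)))
          = R.image (fun i => (i, n)) ∪ C.image (fun j => (n, j)) := by
        conv_rhs => rw [← Finset.insert_erase heR]
        rw [Finset.image_insert, Finset.insert_union]
      have hqE' : (e.1, n) ∉ (R.erase e.1).image (fun i => (i, n))
            ∪ C.image (fun j => (n, j)) := by
        intro hmem
        rcases Finset.mem_union.1 hmem with h | h
        · obtain ⟨a, ha, heq⟩ := Finset.mem_image.1 h
          simp only [Prod.mk.injEq] at heq
          exact Finset.notMem_erase e.1 R (heq.1 ▸ ha)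
        · obtain ⟨b, hb, heq⟩ := Finset.mem_image.1 h
          simp only [Prod.mk.injEq] at heq
          omega
      have hQins : ∀ (A : (ℕ × ℕ) → ℤ) (v : ℤ),
          (∀ e' ∈ S.erase e,
            (update A (e.1, n) v) (e'.1, n) * (update A (e.1, n) v) (n, e'.2) = σ e')
          ↔ (∀ e' ∈ S.erase e, A (e'.1, n) * A (n, e'.2) = σ e') := by
        intro A v
        apply forall₂_congr
        intro e' he'
        have hne1 : (e'.1, n) ≠ (e.1, n) := by
          apply pne1
          intro h1
          exact hleaf (h1 ▸ Finset.mem_image_of_mem Prod.fst he')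
        have hne2 : (n, e'.2) ≠ (e.1, n) := pne1 (by omega)
        rw [update_of_ne hne1, update_of_ne hne2]
      have step : cnt (insert (e.1, n) ((R.erase e.1).image (fun i => (i, n))
              ∪ C.image (fun j => (n, j))))
            (fun A => ∀ e' ∈ S, A (e'.1, n) * A (n, e'.2) = σ e')
          = cnt ((R.erase e.1).image (fun i => (i, n)) ∪ C.image (fun j => (n, j)))
            (fun A => ∀ e' ∈ S.erase e, A (e'.1, n) * A (n, e'.2) = σ e') := by
        apply cnt_det hqE' (g := fun A => σ e * A (n, e.2)) hQins
        · intro A v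
          rw [update_of_ne (pne2 (by omega) : ((n : ℕ), e.2) ≠ (e.1, n))]
        · intro A hA
          have hc : A (n, e.2) = 1 ∨ A (n, e.2) = -1 := by
            apply hA.1
            rw [hins]
            exact Finset.mem_union_right _ (Finset.mem_image_of_mem _ heC)
          have hc2 : A (n, e.2) * A (n, e.2) = 1 := sq_one hc
          constructor
          · intro hP
            refine ⟨fun e' he' => hP e' (Finset.mem_of_mem_erase he'), ?_⟩
            have h0 := hP e heS
            show A (e.1, n) = σ e * A (n, e.2)
            linear_combination A (n, e.2) * h0 - A (e.1, n) * hc2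
          · rintro ⟨hQ, hq⟩ e' he'
            rcases eq_or_ne e' e with rfl | hne'
            · have hq1 : A (e'.1, n) = σ e' * A (n, e'.2) := hq
              rw [hq1]
              linear_combination σ e' * hc2
            · exact hQ e' (Finset.mem_erase.2 ⟨hne', he'⟩)
        · intro A hA hQ
          have hc : A (n, e.2) = 1 ∨ A (n, e.2) = -1 := by
            apply hA.1
            exact Finset.mem_union_right _ (Finset.mem_image_of_mem _ heC)
          rcases hσ e heS with h | h <;> rcases hc with h' | h' <;> rw [h, h'] <;> norm_num
      have hsub' : S.erase e ⊆ (R.erase e.1) ×ˢ C := by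
        intro e' he'
        have h1 := Finset.mem_product.1 (hSRC (Finset.mem_of_mem_erase he'))
        refine Finset.mem_product.2 ⟨Finset.mem_erase.2 ⟨?_, h1.1⟩, h1.2⟩
        intro heq
        exact hleaf (heq ▸ Finset.mem_image_of_mem Prod.fst he')
      have hihres := ih (Nat.le_of_succ_le hm) (S.erase e) (R.erase e.1) C σ
        (by rw [Finset.card_erase_of_mem heS]; exact Nat.sub_le_sub_right hScard 1)
        (fun e' he' => hσ e' (Finset.mem_of_mem_erase he'))
        hsub' ((Finset.erase_subset _ _).trans hR) hC hrect'
      rw [← hins, step]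
      have hRcard : R.card = (R.erase e.1).card + 1 :=
        (Finset.card_erase_add_one heR).symm
      rw [hScard', hRcard]
      calc 2 ^ ((S.erase e).card + 1) * cnt _ _
          = 2 * (2 ^ (S.erase e).card * cnt _ _) := by ring
        _ = 2 * 2 ^ ((R.erase e.1).card + C.card) := by rw [hihres]
        _ = 2 ^ ((R.erase e.1).card + 1 + C.card) := by ring
    · -- column leaf : peel q = (n, e.2)
      have hins : insert (n, e.2) (R.image (fun i => (i, n))
            ∪ (C.erase e.2).image (fun j => (n, j)))
          = R.image (fun i => (i, n)) ∪ C.image (fun j => (n, j)) := by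
        conv_rhs => rw [← Finset.insert_erase heC]
        rw [Finset.image_insert, Finset.union_insert]
      have hqE' : (n, e.2) ∉ R.image (fun i => (i, n))
            ∪ (C.erase e.2).image (fun j => (n, j)) := by
        intro hmem
        rcases Finset.mem_union.1 hmem with h | h
        · obtain ⟨a, ha, heq⟩ := Finset.mem_image.1 h
          simp only [Prod.mk.injEq] at heq
          have := (Finset.mem_Icc.1 (hR ha)).2
          omega
        · obtain ⟨b, hb, heq⟩ := Finset.mem_image.1 h
          simp only [Prod.mk.injEq] at heq
          exact Finset.notMem_erase e.2 C (heq.2 ▸ hb)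
      have hQins : ∀ (A : (ℕ × ℕ) → ℤ) (v : ℤ),
          (∀ e' ∈ S.erase e,
            (update A (n, e.2) v) (e'.1, n) * (update A (n, e.2) v) (n, e'.2) = σ e')
          ↔ (∀ e' ∈ S.erase e, A (e'.1, n) * A (n, e'.2) = σ e') := by
        intro A v
        apply forall₂_congr
        intro e' he'
        have h1R : e'.1 ∈ R := (Finset.mem_product.1 (hSRC (Finset.mem_of_mem_erase he'))).1
        have h1n : e'.1 ≤ n - 1 := (Finset.mem_Icc.1 (hR h1R)).2
        have hne1 : (e'.1, n) ≠ (n, e.2) := pne1 (by omega)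
        have hne2 : (n, e'.2) ≠ (n, e.2) := by
          apply pne2
          intro h2
          exact hleaf (h2 ▸ Finset.mem_image_of_mem Prod.snd he')
        rw [update_of_ne hne1, update_of_ne hne2]
      have step : cnt (insert (n, e.2) (R.image (fun i => (i, n))
              ∪ (C.erase e.2).image (fun j => (n, j))))
            (fun A => ∀ e' ∈ S, A (e'.1, n) * A (n, e'.2) = σ e')
          = cnt (R.image (fun i => (i, n)) ∪ (C.erase e.2).image (fun j => (n, j)))
            (fun A => ∀ e' ∈ S.erase e, A (e'.1, n) * A (n, e'.2) = σ e') := by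
        apply cnt_det hqE' (g := fun A => σ e * A (e.1, n)) hQins
        · intro A v
          rw [update_of_ne (pne1 (by omega) : ((e.1 : ℕ), n) ≠ (n, e.2))]
        · intro A hA
          have hc : A (e.1, n) = 1 ∨ A (e.1, n) = -1 := by
            apply hA.1
            rw [hins]
            exact Finset.mem_union_left _ (Finset.mem_image_of_mem _ heR)
          have hc2 : A (e.1, n) * A (e.1, n) = 1 := sq_one hc
          constructor
          · intro hP
            refine ⟨fun e' he' => hP e' (Finset.mem_of_mem_erase he'), ?_⟩
            have h0 := hP e heS
            show A (n, e.2) = σ e * A (e.1, n)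
            linear_combination A (e.1, n) * h0 - A (n, e.2) * hc2
          · rintro ⟨hQ, hq⟩ e' he'
            rcases eq_or_ne e' e with rfl | hne'
            · have hq1 : A (n, e'.2) = σ e' * A (e'.1, n) := hq
              rw [hq1]
              linear_combination σ e' * hc2
            · exact hQ e' (Finset.mem_erase.2 ⟨hne', he'⟩)
        · intro A hA hQ
          have hc : A (e.1, n) = 1 ∨ A (e.1, n) = -1 := by
            apply hA.1
            exact Finset.mem_union_left _ (Finset.mem_image_of_mem _ heR)
          rcases hσ e heS with h | h <;> rcases hc with h' | h' <;> rw [h, h'] <;> norm_num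
      have hsub' : S.erase e ⊆ R ×ˢ (C.erase e.2) := by
        intro e' he'
        have h1 := Finset.mem_product.1 (hSRC (Finset.mem_of_mem_erase he'))
        refine Finset.mem_product.2 ⟨h1.1, Finset.mem_erase.2 ⟨?_, h1.2⟩⟩
        intro heq
        exact hleaf (heq ▸ Finset.mem_image_of_mem Prod.snd he')
      have hihres := ih (Nat.le_of_succ_le hm) (S.erase e) R (C.erase e.2) σ
        (by rw [Finset.card_erase_of_mem heS]; exact Nat.sub_le_sub_right hScard 1)
        (fun e' he' => hσ e' (Finset.mem_of_mem_erase he'))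
        hsub' hR ((Finset.erase_subset _ _).trans hC) hrect'
      rw [← hins, step]
      have hCcard : C.card = (C.erase e.2).card + 1 :=
        (Finset.card_erase_add_one heC).symm
      rw [hScard', hCcard]
      calc 2 ^ ((S.erase e).card + 1) * cnt _ _
          = 2 * (2 ^ (S.erase e).card * cnt _ _) := by ring
        _ = 2 * 2 ^ (R.card + (C.erase e.2).card) := by rw [hihres]
        _ = 2 ^ (R.card + ((C.erase e.2).card + 1)) := by ring

lemma sign_bc {x d b c Bv : ℤ} (hx : x = 1 ∨ x = -1) (hd : d = 1 ∨ d = -1)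
    (hb : b = 1 ∨ b = -1) (hc : c = 1 ∨ c = -1) (hBv : Bv = -1 ∨ Bv = 1)
    (h : x * d - b * c = 2 * Bv) : b * c = -Bv := by
  rcases hx with rfl | rfl <;> rcases hd with rfl | rfl <;> rcases hb with rfl | rfl <;>
    rcases hc with rfl | rfl <;> rcases hBv with rfl | rfl <;> norm_num at *; done

lemma sign_x {x d b c Bv : ℤ} (hd : d = 1 ∨ d = -1)
    (h : x * d - b * c = 2 * Bv) : x = d * (2 * Bv + b * c) := by
  rcases hd with rfl | rfl <;> linarith

lemma sign_x_rev {x d b c Bv : ℤ} (hd : d = 1 ∨ d = -1)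
    (h : x = d * (2 * Bv + b * c)) : x * d - b * c = 2 * Bv := by
  rcases hd with rfl | rfl <;> rw [h] <;> ring

lemma sign_g {d b c Bv : ℤ} (hd : d = 1 ∨ d = -1) (hb : b = 1 ∨ b = -1)
    (hc : c = 1 ∨ c = -1) (hBv : Bv = -1 ∨ Bv = 0 ∨ Bv = 1)
    (hbc : Bv ≠ 0 → b * c = -Bv) :
    d * (2 * Bv + b * c) = 1 ∨ d * (2 * Bv + b * c) = -1 := by
  rcases hBv with rfl | rfl | rfl
  · have h1 := hbc (by norm_num)
    rw [h1]
    rcases hd with rfl | rfl <;> norm_num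
  · rcases hd with rfl | rfl <;> rcases hb with rfl | rfl <;> rcases hc with rfl | rfl <;>
      norm_num
  · have h1 := hbc (by norm_num)
    rw [h1]
    rcases hd with rfl | rfl <;> norm_num

section main

variable (n : ℕ) (I : Finset (ℕ × ℕ))

lemma mem_mgrid {p : ℕ × ℕ} (h : p ∈ mgrid n n) :
    1 ≤ p.1 ∧ p.1 ≤ n - 1 ∧ 1 ≤ p.2 ∧ p.2 ≤ n - 1 := by
  simp only [mgrid, Finset.mem_product, Finset.mem_Icc] at h
  exact ⟨h.1.1, h.1.2, h.2.1, h.2.2⟩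

lemma chio_eq :
    chioExt n n I = I ∪ insert (n, n)
      ((proj1 I).image (fun i => (i, n)) ∪ (proj2 I).image (fun j => (n, j))) := by
  ext p
  simp only [chioExt, proj1, proj2, Finset.mem_insert, Finset.mem_union]
  tauto

lemma card_fullGrid : (fullGrid n).card = n ^ 2 := by
  simp [fullGrid, Nat.card_Icc, sq]

lemma chio_subset_full (hn : 1 ≤ n) (hI : I ⊆ mgrid n n) :
    chioExt n n I ⊆ fullGrid n := by
  intro p hp
  simp only [chioExt] at hp
  rcases Finset.mem_insert.1 hp with rfl | hp'
  · simp only [fullGrid, Finset.mem_product, Finset.mem_Icc]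
    omega
  rcases Finset.mem_union.1 hp' with hp2 | hp2
  · rcases Finset.mem_union.1 hp2 with hp3 | hp3
    · obtain ⟨x, hx, rfl⟩ := Finset.mem_image.1 hp3
      obtain ⟨q, hq, rfl⟩ := Finset.mem_image.1 hx
      have := mem_mgrid n (hI hq)
      simp only [fullGrid, Finset.mem_product, Finset.mem_Icc]
      omega
    · obtain ⟨x, hx, rfl⟩ := Finset.mem_image.1 hp3
      obtain ⟨q, hq, rfl⟩ := Finset.mem_image.1 hx
      have := mem_mgrid n (hI hq)
      simp only [fullGrid, Finset.mem_product, Finset.mem_Icc]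
      omega
  · have := mem_mgrid n (hI hp2)
    simp only [fullGrid, Finset.mem_product, Finset.mem_Icc]
    omega

lemma card_chio (hn : 1 ≤ n) (hI : I ⊆ mgrid n n) :
    (chioExt n n I).card = 1 + ((proj1 I).card + (proj2 I).card) + I.card := by
  have hIne : ∀ p ∈ I, 1 ≤ p.1 ∧ p.1 ≤ n - 1 ∧ 1 ≤ p.2 ∧ p.2 ≤ n - 1 :=
    fun p hp => mem_mgrid n (hI hp)
  have hd1 : Disjoint ((proj1 I).image (fun i => (i, n)))
      ((proj2 I).image (fun j => (n, j))) := by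
    rw [Finset.disjoint_left]
    rintro p hp1 hp2
    obtain ⟨a, ha, rfl⟩ := Finset.mem_image.1 hp1
    obtain ⟨b, hb, heq⟩ := Finset.mem_image.1 hp2
    obtain ⟨q, hq, rfl⟩ := Finset.mem_image.1 ha
    simp only [Prod.mk.injEq] at heq
    have := hIne q hq
    omega
  have hd2 : Disjoint ((proj1 I).image (fun i => (i, n))
      ∪ (proj2 I).image (fun j => (n, j))) I := by
    rw [Finset.disjoint_left]
    rintro p hp1 hp2
    rcases Finset.mem_union.1 hp1 with h | h
    · obtain ⟨a, ha, rfl⟩ := Finset.mem_image.1 h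
      have := hIne _ hp2
      simp only at this
      omega
    · obtain ⟨b, hb, rfl⟩ := Finset.mem_image.1 h
      have := hIne _ hp2
      simp only at this
      omega
  have hnn : (n, n) ∉ ((proj1 I).image (fun i => (i, n))
      ∪ (proj2 I).image (fun j => (n, j))) ∪ I := by
    intro h
    rcases Finset.mem_union.1 h with h | h
    · rcases Finset.mem_union.1 h with h | h
      · obtain ⟨a, ha, heq⟩ := Finset.mem_image.1 h
        obtain ⟨q, hq, rfl⟩ := Finset.mem_image.1 ha
        simp only [Prod.mk.injEq] at heq
        have := hIne q hq
        omega
      · obtain ⟨b, hb, heq⟩ := Finset.mem_image.1 h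
        obtain ⟨q, hq, rfl⟩ := Finset.mem_image.1 hb
        simp only [Prod.mk.injEq] at heq
        have := hIne q hq
        omega
    · have := hIne _ h
      omega
  have hinj1 : ((proj1 I).image (fun i => (i, n))).card = (proj1 I).card :=
    Finset.card_image_of_injective _ (fun a b h => congrArg Prod.fst h)
  have hinj2 : ((proj2 I).image (fun j => (n, j))).card = (proj2 I).card :=
    Finset.card_image_of_injective _ (fun a b h => congrArg Prod.snd h)
  have : chioExt n n I = insert (n, n) (((proj1 I).image (fun i => (i, n))
      ∪ (proj2 I).image (fun j => (n, j))) ∪ I) := rfl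
  rw [this, Finset.card_insert_of_notMem hnn, Finset.card_union_of_disjoint hd2,
    Finset.card_union_of_disjoint hd1, hinj1, hinj2]
  omega

lemma main_count (hn : 2 ≤ n) (hI : I ⊆ mgrid n n)
    (B : ℕ × ℕ → ℤ) (hB : ∀ p ∈ I, B p = -1 ∨ B p = 0 ∨ B p = 1) :
    Set.ncard {A | IsSignOn (fullGrid n) A ∧ CondensesTo n n I A B}
      = 2 ^ (n ^ 2 - (chioExt n n I).card) *
        (2 * cnt ((proj1 I).image (fun i => (i, n)) ∪ (proj2 I).image (fun j => (n, j)))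
          (fun A => ∀ p ∈ I, B p ≠ 0 → A (p.1, n) * A (n, p.2) = -B p)) := by
  have hn1 : 1 ≤ n := by omega
  have hIne : ∀ p ∈ I, 1 ≤ p.1 ∧ p.1 ≤ n - 1 ∧ 1 ≤ p.2 ∧ p.2 ≤ n - 1 :=
    fun p hp => mem_mgrid n (hI hp)
  have hnn1 : n - 1 < n := by omega
  -- membership facts in chioExt
  have hmemI : ∀ p ∈ I, p ∈ chioExt n n I := by
    intro p hp
    simp only [chioExt, Finset.mem_insert, Finset.mem_union]
    tauto
  have hmemR : ∀ p ∈ I, (p.1, n) ∈ chioExt n n I := by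
    intro p hp
    refine Finset.mem_insert_of_mem (Finset.mem_union_left _ (Finset.mem_union_left _ ?_))
    exact Finset.mem_image_of_mem _ (Finset.mem_image_of_mem _ hp)
  have hmemC : ∀ p ∈ I, (n, p.2) ∈ chioExt n n I := by
    intro p hp
    refine Finset.mem_insert_of_mem (Finset.mem_union_left _ (Finset.mem_union_right _ ?_))
    exact Finset.mem_image_of_mem _ (Finset.mem_image_of_mem _ hp)
  have hmemD : (n, n) ∈ chioExt n n I := Finset.mem_insert_self _ _
  set K := insert (n, n)
      ((proj1 I).image (fun i => (i, n)) ∪ (proj2 I).image (fun j => (n, j))) with hK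
  -- step 1 : free points off chioExt
  have hsub := chio_subset_full n I hn1 hI
  have hstep1 : cnt (fullGrid n) (fun A => CondensesTo n n I A B)
      = 2 ^ (n ^ 2 - (chioExt n n I).card) *
        cnt (chioExt n n I) (fun A => CondensesTo n n I A B) := by
    have hcard : (fullGrid n \ chioExt n n I).card = n ^ 2 - (chioExt n n I).card := by
      rw [Finset.card_sdiff_of_subset hsub, card_fullGrid]
    rw [← hcard, ← cnt_free_set Finset.sdiff_disjoint ?ins]
    · rw [Finset.sdiff_union_of_subset hsub]
    case ins =>
      intro q hq A v
      have hqc : q ∉ chioExt n n I := (Finset.mem_sdiff.1 hq).2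
      unfold CondensesTo
      apply forall₂_congr
      intro p hp
      have n1 : p ≠ q := fun h => hqc (h ▸ hmemI p hp)
      have n2 : ((n : ℕ), (n : ℕ)) ≠ q := fun h => hqc (h ▸ hmemD)
      have n3 : (p.1, n) ≠ q := fun h => hqc (h ▸ hmemR p hp)
      have n4 : ((n : ℕ), p.2) ≠ q := fun h => hqc (h ▸ hmemC p hp)
      rw [update_of_ne n1, update_of_ne n2, update_of_ne n3, update_of_ne n4]
  -- step 3 : peel off the I entries
  have hpeel : ∀ J : Finset (ℕ × ℕ), J ⊆ I →
      cnt (J ∪ K) (fun A =>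
        (∀ p ∈ J, A p * A (n, n) - A (p.1, n) * A (n, p.2) = 2 * B p) ∧
        (∀ p ∈ I, p ∉ J → B p ≠ 0 → A (p.1, n) * A (n, p.2) = -B p))
      = cnt K (fun A => ∀ p ∈ I, B p ≠ 0 → A (p.1, n) * A (n, p.2) = -B p) := by
    intro J
    induction J using Finset.induction with
    | empty =>
      intro _
      rw [Finset.empty_union]
      apply cnt_congr
      intro A _
      constructor
      · rintro ⟨-, h2⟩ p hp hBp
        exact h2 p hp (Finset.notMem_empty p) hBp
      · intro h
        exact ⟨fun p hp => absurd hp (Finset.notMem_empty p), fun p hp _ hBp => h p hp hBp⟩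
    | @insert a J ha ih =>
      intro hJI
      have haI : a ∈ I := hJI (Finset.mem_insert_self a J)
      have haco := hIne a haI
      have ha1n : a.1 ≠ n := Nat.ne_of_lt (Nat.lt_of_le_of_lt haco.2.1 hnn1)
      have ha2n : a.2 ≠ n := Nat.ne_of_lt (Nat.lt_of_le_of_lt haco.2.2.2 hnn1)
      have hane : ∀ X : ℕ × ℕ, X.2 = n → X ≠ a := by
        rintro X h1 rfl
        exact ha2n h1
      have hane' : ∀ X : ℕ × ℕ, X.1 = n → X ≠ a := by
        rintro X h1 rfl
        exact ha1n h1
      have haK : a ∉ J ∪ K := by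
        intro h
        rcases Finset.mem_union.1 h with h | h
        · exact ha h
        · rw [hK] at h
          rcases Finset.mem_insert.1 h with h | h
          · exact ha1n (congrArg Prod.fst h)
          · rcases Finset.mem_union.1 h with h | h
            · obtain ⟨x, hx, heq⟩ := Finset.mem_image.1 h
              exact hane _ (congrArg Prod.snd heq.symm) rfl |>.elim
            · obtain ⟨x, hx, heq⟩ := Finset.mem_image.1 h
              exact hane' _ (congrArg Prod.fst heq.symm) rfl |>.elim
      have hmemD' : (n, n) ∈ J ∪ K := Finset.mem_union_right _ (Finset.mem_insert_self _ _)
      have hmemR' : ∀ p ∈ I, (p.1, n) ∈ J ∪ K := by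
        intro p hp
        refine Finset.mem_union_right _ (Finset.mem_insert_of_mem ?_)
        exact Finset.mem_union_left _
          (Finset.mem_image_of_mem _ (Finset.mem_image_of_mem _ hp))
      have hmemC' : ∀ p ∈ I, (n, p.2) ∈ J ∪ K := by
        intro p hp
        refine Finset.mem_union_right _ (Finset.mem_insert_of_mem ?_)
        exact Finset.mem_union_right _
          (Finset.mem_image_of_mem _ (Finset.mem_image_of_mem _ hp))
      have hins : insert a J ∪ K = insert a (J ∪ K) := Finset.insert_union a J K
      rw [hins]
      have hdet := cnt_det (E := J ∪ K) (q := a) haK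
        (P := fun A =>
          (∀ p ∈ insert a J, A p * A (n, n) - A (p.1, n) * A (n, p.2) = 2 * B p) ∧
          (∀ p ∈ I, p ∉ insert a J → B p ≠ 0 → A (p.1, n) * A (n, p.2) = -B p))
        (Q := fun A =>
          (∀ p ∈ J, A p * A (n, n) - A (p.1, n) * A (n, p.2) = 2 * B p) ∧
          (∀ p ∈ I, p ∉ J → B p ≠ 0 → A (p.1, n) * A (n, p.2) = -B p))
        (g := fun A => A (n, n) * (2 * B a + A (a.1, n) * A (n, a.2)))
        ?hQ ?hg ?hPQ ?hgv
      · rw [hdet]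
        exact ih (Finset.Subset.trans (Finset.subset_insert a J) hJI)
      case hQ =>
        intro A v
        apply and_congr
        · apply forall₂_congr
          intro p hp
          have np : p ≠ a := fun h => ha (h ▸ hp)
          rw [update_of_ne np,
            update_of_ne (hane (n, n) rfl),
            update_of_ne (hane (p.1, n) rfl),
            update_of_ne (hane' (n, p.2) rfl)]
        · apply forall₂_congr
          intro p hp
          refine imp_congr Iff.rfl (imp_congr Iff.rfl ?_)
          rw [update_of_ne (hane (p.1, n) rfl), update_of_ne (hane' (n, p.2) rfl)]
      case hg =>
        intro A v
        rw [update_of_ne (hane (n, n) rfl), update_of_ne (hane (a.1, n) rfl),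
          update_of_ne (hane' (n, a.2) rfl)]
      case hPQ =>
        intro A hA
        have hd : A (n, n) = 1 ∨ A (n, n) = -1 :=
          hA.1 _ (Finset.mem_insert_of_mem hmemD')
        have hb : A (a.1, n) = 1 ∨ A (a.1, n) = -1 :=
          hA.1 _ (Finset.mem_insert_of_mem (hmemR' a haI))
        have hc : A (n, a.2) = 1 ∨ A (n, a.2) = -1 :=
          hA.1 _ (Finset.mem_insert_of_mem (hmemC' a haI))
        have hx : A a = 1 ∨ A a = -1 := hA.1 a (Finset.mem_insert_self a _)
        constructor
        · rintro ⟨h1, h2⟩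
          have hEa := h1 a (Finset.mem_insert_self a J)
          refine ⟨⟨fun p hp => h1 p (Finset.mem_insert_of_mem hp),
            fun p hpI hpJ hBp => ?_⟩, sign_x hd hEa⟩
          rcases eq_or_ne p a with rfl | hpa
          · refine sign_bc hx hd hb hc ?_ hEa
            rcases hB p hpI with h | h | h
            · exact Or.inl h
            · exact absurd h hBp
            · exact Or.inr h
          · exact h2 p hpI (by simp [hpa, hpJ]) hBp
        · rintro ⟨⟨h1, h2⟩, hxa⟩
          constructor
          · intro p hp
            rcases Finset.mem_insert.1 hp with rfl | hp'
            · exact sign_x_rev hd hxa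
            · exact h1 p hp'
          · intro p hpI hpJ hBp
            exact h2 p hpI (fun h => hpJ (Finset.mem_insert_of_mem h)) hBp
      case hgv =>
        intro A hA hQA
        have hd : A (n, n) = 1 ∨ A (n, n) = -1 := hA.1 _ hmemD'
        have hb : A (a.1, n) = 1 ∨ A (a.1, n) = -1 := hA.1 _ (hmemR' a haI)
        have hc : A (n, a.2) = 1 ∨ A (n, a.2) = -1 := hA.1 _ (hmemC' a haI)
        exact sign_g hd hb hc (hB a haI) (fun hBp => hQA.2 a haI ha hBp)
  -- step 2 and 4 : rewrite chioExt as I ∪ K and apply peel with J = I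
  have hstep2 : cnt (chioExt n n I) (fun A => CondensesTo n n I A B)
      = cnt K (fun A => ∀ p ∈ I, B p ≠ 0 → A (p.1, n) * A (n, p.2) = -B p) := by
    rw [chio_eq, ← hK]
    rw [← hpeel I Finset.Subset.rfl]
    apply cnt_congr
    intro A _
    constructor
    · intro h
      exact ⟨h, fun p hpI hpI' => absurd hpI hpI'⟩
    · intro h
      exact h.1
  -- step 5 : free point (n, n)
  have hstep5 : cnt K (fun A => ∀ p ∈ I, B p ≠ 0 → A (p.1, n) * A (n, p.2) = -B p)
      = 2 * cnt ((proj1 I).image (fun i => (i, n)) ∪ (proj2 I).image (fun j => (n, j)))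
        (fun A => ∀ p ∈ I, B p ≠ 0 → A (p.1, n) * A (n, p.2) = -B p) := by
    rw [hK]
    apply cnt_free
    · intro h
      rcases Finset.mem_union.1 h with h | h
      · obtain ⟨x, hx, heq⟩ := Finset.mem_image.1 h
        obtain ⟨q, hq, rfl⟩ := Finset.mem_image.1 hx
        exact Nat.ne_of_lt (Nat.lt_of_le_of_lt (hIne q hq).2.1 hnn1)
          (congrArg Prod.fst heq)
      · obtain ⟨x, hx, heq⟩ := Finset.mem_image.1 h
        obtain ⟨q, hq, rfl⟩ := Finset.mem_image.1 hx
        exact Nat.ne_of_lt (Nat.lt_of_le_of_lt (hIne q hq).2.2.2 hnn1)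
          (congrArg Prod.snd heq)
    · intro A v
      apply forall₂_congr
      intro p hp
      have h1 := hIne p hp
      refine imp_congr Iff.rfl ?_
      rw [update_of_ne (pne1 (Nat.ne_of_lt (Nat.lt_of_le_of_lt h1.2.1 hnn1))),
        update_of_ne (pne2 (Nat.ne_of_lt (Nat.lt_of_le_of_lt h1.2.2.2 hnn1)))]
  have hfin : Set.ncard {A | IsSignOn (fullGrid n) A ∧ CondensesTo n n I A B}
      = cnt (fullGrid n) (fun A => CondensesTo n n I A B) := rfl
  rw [hfin, hstep1, hstep2, hstep5]

end main

lemma rect_count (n i i' j j' : ℕ) (b1 b2 b3 b4 : ℤ)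
    (hii : i ≠ i') (hjj : j ≠ j') (hin : i ≠ n) (hi'n : i' ≠ n)
    (hjn : j ≠ n) (hj'n : j' ≠ n)
    (hs1 : b1 = 1 ∨ b1 = -1) (hs2 : b2 = 1 ∨ b2 = -1)
    (hs3 : b3 = 1 ∨ b3 = -1) (hs4 : b4 = 1 ∨ b4 = -1)
    (hprod : b1 * b2 * b3 * b4 = 1) :
    cnt {(i,n), (i',n), (n,j), (n,j')}
      (fun A => A (i,n) * A (n,j) = -b1 ∧ A (i,n) * A (n,j') = -b2 ∧
        A (i',n) * A (n,j) = -b3 ∧ A (i',n) * A (n,j') = -b4) = 2 := by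
  have hE1 : ({(i,n), (i',n), (n,j), (n,j')} : Finset (ℕ × ℕ))
      = insert (i',n) {(i,n), (n,j), (n,j')} := Finset.insert_comm _ _ _
  have hE2 : ({(i,n), (n,j), (n,j')} : Finset (ℕ × ℕ))
      = insert (n,j') {(i,n), (n,j)} := by
    rw [Finset.pair_comm (n,j) (n,j'), Finset.insert_comm]
  have hE3 : ({(i,n), (n,j)} : Finset (ℕ × ℕ)) = insert (n,j) {(i,n)} :=
    Finset.pair_comm _ _
  have hq1 : ((i',n) : ℕ × ℕ) ∉ ({(i,n), (n,j), (n,j')} : Finset (ℕ × ℕ)) := by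
    simp only [Finset.mem_insert, Finset.mem_singleton, Prod.mk.injEq]
    push_neg
    exact ⟨fun h => absurd h.symm hii, fun h => absurd h hi'n, fun h => absurd h hi'n⟩
  have hq2 : ((n,j') : ℕ × ℕ) ∉ ({(i,n), (n,j)} : Finset (ℕ × ℕ)) := by
    simp only [Finset.mem_insert, Finset.mem_singleton, Prod.mk.injEq]
    push_neg
    exact ⟨fun h => absurd h.symm hin, fun _ => fun h => absurd h.symm hjj⟩
  have hq3 : ((n,j) : ℕ × ℕ) ∉ ({(i,n)} : Finset (ℕ × ℕ)) := by
    simp only [Finset.mem_singleton, Prod.mk.injEq]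
    push_neg
    exact fun h => absurd h.symm hin
  have hdet1 : cnt (insert (i',n) {(i,n), (n,j), (n,j')})
      (fun A => A (i,n) * A (n,j) = -b1 ∧ A (i,n) * A (n,j') = -b2 ∧
        A (i',n) * A (n,j) = -b3 ∧ A (i',n) * A (n,j') = -b4)
      = cnt {(i,n), (n,j), (n,j')}
      (fun A => A (i,n) * A (n,j) = -b1 ∧ A (i,n) * A (n,j') = -b2 ∧
        -b3 * A (n,j) * A (n,j') = -b4) := by
    apply cnt_det hq1 (g := fun A => -b3 * A (n,j))
    · intro A v
      rw [update_of_ne (pne1 hii), update_of_ne (pne1 (Ne.symm hi'n)),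
        update_of_ne (pne1 (Ne.symm hi'n) : ((n : ℕ), j') ≠ (i', n))]
    · intro A v
      rw [update_of_ne (pne1 (Ne.symm hi'n))]
    · intro A hA
      have hcj : A (n,j) = 1 ∨ A (n,j) = -1 := hA.1 _ (by simp)
      have hcj2 := sq_one hcj
      constructor
      · rintro ⟨h1, h2, h3, h4⟩
        have hr' : A (i',n) = -b3 * A (n,j) := by
          linear_combination A (n,j) * h3 - A (i',n) * hcj2
        refine ⟨⟨h1, h2, ?_⟩, hr'⟩
        rw [← hr']
        exact h4
      · rintro ⟨⟨h1, h2, h34⟩, hq⟩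
        have hq' : A (i',n) = -b3 * A (n,j) := hq
        refine ⟨h1, h2, ?_, ?_⟩
        · rw [hq']
          linear_combination (-b3) * hcj2
        · rw [hq']
          exact h34
    · intro A hA hQA
      have hcj : A (n,j) = 1 ∨ A (n,j) = -1 := hA.1 _ (by simp)
      show -b3 * A (n,j) = 1 ∨ -b3 * A (n,j) = -1
      rcases hs3 with rfl | rfl <;> rcases hcj with h | h <;> rw [h] <;> norm_num
  have hdet2 : cnt (insert (n,j') {(i,n), (n,j)})
      (fun A => A (i,n) * A (n,j) = -b1 ∧ A (i,n) * A (n,j') = -b2 ∧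
        -b3 * A (n,j) * A (n,j') = -b4)
      = cnt {(i,n), (n,j)}
      (fun A => A (i,n) * A (n,j) = -b1 ∧
        -b3 * A (n,j) * (-b2 * A (i,n)) = -b4) := by
    apply cnt_det hq2 (g := fun A => -b2 * A (i,n))
    · intro A v
      rw [update_of_ne (pne1 hin), update_of_ne (pne2 hjj)]
    · intro A v
      rw [update_of_ne (pne2 (Ne.symm hj'n) : ((i : ℕ), n) ≠ (n, j'))]
    · intro A hA
      have hr : A (i,n) = 1 ∨ A (i,n) = -1 := hA.1 _ (by simp)
      have hr2 := sq_one hr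
      constructor
      · rintro ⟨h1, h2, h34⟩
        have hcj' : A (n,j') = -b2 * A (i,n) := by
          linear_combination A (i,n) * h2 - A (n,j') * hr2
        refine ⟨⟨h1, ?_⟩, hcj'⟩
        rw [← hcj']
        exact h34
      · rintro ⟨⟨h1, h24⟩, hq⟩
        have hq' : A (n,j') = -b2 * A (i,n) := hq
        refine ⟨h1, ?_, ?_⟩
        · rw [hq']
          linear_combination (-b2) * hr2
        · rw [hq']
          exact h24
    · intro A hA hQA
      have hr : A (i,n) = 1 ∨ A (i,n) = -1 := hA.1 _ (by simp)
      show -b2 * A (i,n) = 1 ∨ -b2 * A (i,n) = -1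
      rcases hs2 with rfl | rfl <;> rcases hr with h | h <;> rw [h] <;> norm_num
  have hdet3 : cnt (insert (n,j) {(i,n)})
      (fun A => A (i,n) * A (n,j) = -b1 ∧
        -b3 * A (n,j) * (-b2 * A (i,n)) = -b4)
      = cnt {(i,n)} (fun _ => -b3 * -b1 * -b2 = -b4) := by
    apply cnt_det hq3 (g := fun A => -b1 * A (i,n))
    · intro A v
      exact Iff.rfl
    · intro A v
      rw [update_of_ne (pne2 (Ne.symm hjn) : ((i : ℕ), n) ≠ (n, j))]
    · intro A hA
      have hr : A (i,n) = 1 ∨ A (i,n) = -1 := hA.1 _ (by simp)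
      have hr2 := sq_one hr
      constructor
      · rintro ⟨h1, h24⟩
        have hcj : A (n,j) = -b1 * A (i,n) := by
          linear_combination A (i,n) * h1 - A (n,j) * hr2
        refine ⟨?_, hcj⟩
        linear_combination h24 - (b3 * b2 * A (i,n)) * hcj + (b1 * b2 * b3) * hr2
      · rintro ⟨hQ3c, hq⟩
        have hq' : A (n,j) = -b1 * A (i,n) := hq
        constructor
        · rw [hq']
          linear_combination (-b1) * hr2
        · rw [hq']
          linear_combination hQ3c - (b1 * b2 * b3) * hr2
    · intro A hA hQA
      have hr : A (i,n) = 1 ∨ A (i,n) = -1 := hA.1 _ (by simp)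
      show -b1 * A (i,n) = 1 ∨ -b1 * A (i,n) = -1
      rcases hs1 with rfl | rfl <;> rcases hr with h | h <;> rw [h] <;> norm_num
  have hQ3true : -b3 * -b1 * -b2 = -b4 := by
    rcases hs1 with rfl | rfl <;> rcases hs2 with rfl | rfl <;> rcases hs3 with rfl | rfl <;>
      rcases hs4 with rfl | rfl <;> norm_num at *; done
  have hlast : cnt {(i,n)} (fun _ => -b3 * -b1 * -b2 = -b4) = 2 := by
    rw [cnt_congr (Q := fun _ => True) (fun A _ => ⟨fun _ => trivial, fun _ => hQ3true⟩),
      cnt_true, Finset.card_singleton]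
    norm_num
  rw [hE1, hdet1, hE2, hdet2, hE3, hdet3, hlast]

/-- **Evaluation of the Chio measure on four-entry specifications (recipe H4).**
Let `n ≥ 2`, `I ⊆ {1,…,n-1}²` with `|I| = 4`, and `B : I → {−1,0,+1}`. If `I` is not a
matrix-4-circuit `{i,i'}×{j,j'}` with all four `B`-values nonzero, then
`P_chio[E_B] = P_lcf[E_B] = (1/2)^{|I|+|Supp(B)|}`. If `I = {i,i'}×{j,j'}` and `B` is
nonzero on `I`, then: if `B(i,j)·B(i,j')·B(i',j)·B(i',j') = −1` then `P_chio[E_B] = 0`,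
and if the product is `+1` then `P_chio[E_B] = (1/2)⁷ = 2·P_lcf[E_B]`. -/
theorem chio_measure_four_entries (n : ℕ) (hn : 2 ≤ n)
    (I : Finset (ℕ × ℕ)) (hI : I ⊆ mgrid n n) (hk : I.card = 4)
    (B : ℕ × ℕ → ℤ) (hB : ∀ p ∈ I, B p = -1 ∨ B p = 0 ∨ B p = 1) :
    ((¬ ∃ i i' j j' : ℕ, i < i' ∧ j < j' ∧
        I = {(i, j), (i, j'), (i', j), (i', j')} ∧ ∀ p ∈ I, B p ≠ 0) →
      PchioN n I B = PlcfN I B) ∧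
    (∀ i i' j j' : ℕ, i < i' → j < j' →
      I = {(i, j), (i, j'), (i', j), (i', j')} → (∀ p ∈ I, B p ≠ 0) →
      (B (i, j) * B (i, j') * B (i', j) * B (i', j') = -1 → PchioN n I B = 0) ∧
      (B (i, j) * B (i, j') * B (i', j) * B (i', j') = 1 →
        PchioN n I B = (1 / 2 : ℚ) ^ 7 ∧ PchioN n I B = 2 * PlcfN I B)) := by
  have hn1 : 1 ≤ n := by omega
  have hnn1 : n - 1 < n := by omega
  have hcle : (chioExt n n I).card ≤ n ^ 2 := by
    rw [← card_fullGrid n]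
    exact Finset.card_le_card (chio_subset_full n I hn1 hI)
  have hfg : ∀ x y : ℕ, 1 ≤ x → x ≤ n → 1 ≤ y → y ≤ n → ((x, y) : ℕ × ℕ) ∈ fullGrid n := by
    intro x y h1 h2 h3 h4
    simp only [fullGrid, Finset.mem_product, Finset.mem_Icc]
    omega
  constructor
  · -- Part 1
    intro hnc
    have hforest : ¬ ∃ i i' j j', i ≠ i' ∧ j ≠ j' ∧
        ({(i,j), (i,j'), (i',j), (i',j')} : Finset (ℕ × ℕ))
          ⊆ I.filter (fun p => B p ≠ 0) := by
      rintro ⟨i, i', j, j', h1, h2, hsubr⟩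
      have hrc : ({(i,j), (i,j'), (i',j), (i',j')} : Finset (ℕ × ℕ)).card = 4 := by
        rw [Finset.card_insert_of_notMem, Finset.card_insert_of_notMem,
          Finset.card_insert_of_notMem, Finset.card_singleton]
        · simp only [Finset.mem_singleton, Prod.mk.injEq]
          omega
        · simp only [Finset.mem_insert, Finset.mem_singleton, Prod.mk.injEq]
          omega
        · simp only [Finset.mem_insert, Finset.mem_singleton, Prod.mk.injEq]
          omega
      have hIsub : ({(i,j), (i,j'), (i',j), (i',j')} : Finset (ℕ × ℕ)) ⊆ I :=
        hsubr.trans (Finset.filter_subset _ _)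
      have hIeq : ({(i,j), (i,j'), (i',j), (i',j')} : Finset (ℕ × ℕ)) = I :=
        Finset.eq_of_subset_of_card_le hIsub (by rw [hk, hrc])
      have hnz : ∀ p ∈ I, B p ≠ 0 := by
        intro p hp
        rw [← hIeq] at hp
        exact (Finset.mem_filter.1 (hsubr hp)).2
      rcases (Ne.lt_or_gt h1) with hi | hi <;> rcases (Ne.lt_or_gt h2) with hj | hj
      · exact hnc ⟨i, i', j, j', hi, hj, hIeq.symm, hnz⟩
      · refine hnc ⟨i, i', j', j, hi, hj, ?_, hnz⟩
        rw [← hIeq]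
        ext p
        simp only [Finset.mem_insert, Finset.mem_singleton]
        tauto
      · refine hnc ⟨i', i, j, j', hi, hj, ?_, hnz⟩
        rw [← hIeq]
        ext p
        simp only [Finset.mem_insert, Finset.mem_singleton]
        tauto
      · refine hnc ⟨i', i, j', j, hi, hj, ?_, hnz⟩
        rw [← hIeq]
        ext p
        simp only [Finset.mem_insert, Finset.mem_singleton]
        tauto
    have hRsub : proj1 I ⊆ Finset.Icc 1 (n - 1) := by
      intro x hx
      obtain ⟨p, hp, rfl⟩ := Finset.mem_image.1 hx
      have := mem_mgrid n (hI hp)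
      exact Finset.mem_Icc.2 ⟨this.1, this.2.1⟩
    have hCsub : proj2 I ⊆ Finset.Icc 1 (n - 1) := by
      intro x hx
      obtain ⟨p, hp, rfl⟩ := Finset.mem_image.1 hx
      have := mem_mgrid n (hI hp)
      exact Finset.mem_Icc.2 ⟨this.2.2.1, this.2.2.2⟩
    have hσ : ∀ e ∈ I.filter (fun p => B p ≠ 0), -B e = 1 ∨ -B e = -1 := by
      intro e he
      obtain ⟨heI, hene⟩ := Finset.mem_filter.1 he
      rcases hB e heI with h | h | h
      · left; omega
      · exact absurd h hene
      · right; omega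
    have hSRC : I.filter (fun p => B p ≠ 0) ⊆ proj1 I ×ˢ proj2 I := by
      intro e he
      have heI := Finset.filter_subset _ _ he
      exact Finset.mem_product.2
        ⟨Finset.mem_image_of_mem _ heI, Finset.mem_image_of_mem _ heI⟩
    have hVC := Vcount n hn1 4 le_rfl (I.filter (fun p => B p ≠ 0)) (proj1 I) (proj2 I)
      (fun p => -B p) ((Finset.card_filter_le _ _).trans (le_of_eq hk)) hσ hSRC
      hRsub hCsub hforest
    have hcnt_eq : cnt ((proj1 I).image (fun i => (i, n)) ∪ (proj2 I).image (fun j => (n, j)))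
        (fun A => ∀ p ∈ I, B p ≠ 0 → A (p.1, n) * A (n, p.2) = -B p)
        = cnt ((proj1 I).image (fun i => (i, n)) ∪ (proj2 I).image (fun j => (n, j)))
        (fun A => ∀ e ∈ I.filter (fun p => B p ≠ 0),
          A (e.1, n) * A (n, e.2) = (fun p => -B p) e) := by
      apply cnt_congr
      intro A _
      constructor
      · intro h e he
        obtain ⟨heI, hene⟩ := Finset.mem_filter.1 he
        exact h e heI hene
      · intro h p hp hBp
        exact h p (Finset.mem_filter.2 ⟨hp, hBp⟩)
    have hmain := main_count n I hn hI B hB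
    have hc : (chioExt n n I).card = 1 + ((proj1 I).card + (proj2 I).card) + 4 := by
      rw [card_chio n I hn1 hI, hk]
    have hNat : Set.ncard {A | IsSignOn (fullGrid n) A ∧ CondensesTo n n I A B}
        * 2 ^ (4 + (I.filter (fun p => B p ≠ 0)).card) = 2 ^ (n ^ 2) := by
      rw [hmain, hcnt_eq]
      calc 2 ^ (n ^ 2 - (chioExt n n I).card) * (2 * cnt _ _)
            * 2 ^ (4 + (I.filter (fun p => B p ≠ 0)).card)
          = 2 ^ (n ^ 2 - (chioExt n n I).card) * 2 ^ 5 *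
            (2 ^ (I.filter (fun p => B p ≠ 0)).card * cnt _ _) := by ring
        _ = 2 ^ (n ^ 2 - (chioExt n n I).card) * 2 ^ 5 *
            2 ^ ((proj1 I).card + (proj2 I).card) := by rw [hVC]
        _ = 2 ^ (n ^ 2 - (chioExt n n I).card) *
            2 ^ (1 + ((proj1 I).card + (proj2 I).card) + 4) := by ring
        _ = 2 ^ (n ^ 2 - (chioExt n n I).card) * 2 ^ (chioExt n n I).card := by rw [hc]
        _ = 2 ^ (n ^ 2 - (chioExt n n I).card + (chioExt n n I).card) := by
            rw [← pow_add]
        _ = 2 ^ (n ^ 2) := by rw [Nat.sub_add_cancel hcle]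
    have hkey : (Set.ncard {A | IsSignOn (fullGrid n) A ∧ CondensesTo n n I A B} : ℚ)
        * 2 ^ (4 + (I.filter (fun p => B p ≠ 0)).card) = 2 ^ (n ^ 2) := by
      exact_mod_cast hNat
    unfold PchioN PlcfN
    rw [hk]
    rw [div_eq_iff (by positivity : ((2 : ℚ)) ^ (n ^ 2) ≠ 0)]
    rw [div_pow, one_pow]
    rw [div_mul_eq_mul_div, eq_div_iff (by positivity : ((2 : ℚ)) ^ (4 + (I.filter fun p => B p ≠ 0).card) ≠ 0), one_mul]
    exact hkey
  · -- Part 2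
    intro i i' j j' hii hjj hIeq hBnz
    have m1 : ((i, j) : ℕ × ℕ) ∈ I := by rw [hIeq]; simp
    have m2 : ((i, j') : ℕ × ℕ) ∈ I := by rw [hIeq]; simp
    have m3 : ((i', j) : ℕ × ℕ) ∈ I := by rw [hIeq]; simp
    have m4 : ((i', j') : ℕ × ℕ) ∈ I := by rw [hIeq]; simp
    have hco1 := mem_mgrid n (hI m1)
    have hco4 := mem_mgrid n (hI m4)
    simp only at hco1 hco4
    have hs1 : B (i, j) = 1 ∨ B (i, j) = -1 := by
      rcases hB _ m1 with h | h | h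
      · exact Or.inr h
      · exact absurd h (hBnz _ m1)
      · exact Or.inl h
    have hs2 : B (i, j') = 1 ∨ B (i, j') = -1 := by
      rcases hB _ m2 with h | h | h
      · exact Or.inr h
      · exact absurd h (hBnz _ m2)
      · exact Or.inl h
    have hs3 : B (i', j) = 1 ∨ B (i', j) = -1 := by
      rcases hB _ m3 with h | h | h
      · exact Or.inr h
      · exact absurd h (hBnz _ m3)
      · exact Or.inl h
    have hs4 : B (i', j') = 1 ∨ B (i', j') = -1 := by
      rcases hB _ m4 with h | h | h
      · exact Or.inr h
      · exact absurd h (hBnz _ m4)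
      · exact Or.inl h
    constructor
    · -- product = -1 : impossible, measure 0
      intro hprod
      have hset : {A : ℕ × ℕ → ℤ | IsSignOn (fullGrid n) A ∧ CondensesTo n n I A B} = ∅ := by
        ext A
        simp only [Set.mem_setOf_eq, Set.mem_empty_iff_false, iff_false, not_and]
        intro hA hC
        have hsv := hA.1
        have sr : A (i, n) = 1 ∨ A (i, n) = -1 :=
          hsv _ (hfg i n hco1.1 (by omega) hn1 le_rfl)
        have sr' : A (i', n) = 1 ∨ A (i', n) = -1 :=
          hsv _ (hfg i' n hco4.1 (by omega) hn1 le_rfl)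
        have sc : A (n, j) = 1 ∨ A (n, j) = -1 :=
          hsv _ (hfg n j hn1 le_rfl hco1.2.2.1 (by omega))
        have sc' : A (n, j') = 1 ∨ A (n, j') = -1 :=
          hsv _ (hfg n j' hn1 le_rfl hco4.2.2.1 (by omega))
        have sd : A (n, n) = 1 ∨ A (n, n) = -1 :=
          hsv _ (hfg n n hn1 le_rfl hn1 le_rfl)
        have sx1 : A (i, j) = 1 ∨ A (i, j) = -1 :=
          hsv _ (hfg i j hco1.1 (by omega) hco1.2.2.1 (by omega))
        have sx2 : A (i, j') = 1 ∨ A (i, j') = -1 :=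
          hsv _ (hfg i j' hco1.1 (by omega) hco4.2.2.1 (by omega))
        have sx3 : A (i', j) = 1 ∨ A (i', j) = -1 :=
          hsv _ (hfg i' j hco4.1 (by omega) hco1.2.2.1 (by omega))
        have sx4 : A (i', j') = 1 ∨ A (i', j') = -1 :=
          hsv _ (hfg i' j' hco4.1 (by omega) hco4.2.2.1 (by omega))
        have e1 : A (i, n) * A (n, j) = -B (i, j) :=
          sign_bc sx1 sd sr sc (Or.symm hs1) (hC _ m1)
        have e2 : A (i, n) * A (n, j') = -B (i, j') :=
          sign_bc sx2 sd sr sc' (Or.symm hs2) (hC _ m2)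
        have e3 : A (i', n) * A (n, j) = -B (i', j) :=
          sign_bc sx3 sd sr' sc (Or.symm hs3) (hC _ m3)
        have e4 : A (i', n) * A (n, j') = -B (i', j') :=
          sign_bc sx4 sd sr' sc' (Or.symm hs4) (hC _ m4)
        have q1 := sq_one sr
        have q2 := sq_one sr'
        have q3 := sq_one sc
        have q4 := sq_one sc'
        have f1 : B (i, j) = -(A (i, n) * A (n, j)) := by linear_combination e1
        have f2 : B (i, j') = -(A (i, n) * A (n, j')) := by linear_combination e2
        have f3 : B (i', j) = -(A (i', n) * A (n, j)) := by linear_combination e3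
        have f4 : B (i', j') = -(A (i', n) * A (n, j')) := by linear_combination e4
        have key : B (i, j) * B (i, j') * B (i', j) * B (i', j') = 1 := by
          rw [f1, f2, f3, f4]
          linear_combination
            (A (i',n) * A (i',n) * A (n,j) * A (n,j) * A (n,j') * A (n,j')) * q1
            + (A (n,j) * A (n,j) * A (n,j') * A (n,j')) * q2
            + (A (n,j') * A (n,j')) * q3 + q4
        rw [hprod] at key
        norm_num at key
      unfold PchioN
      rw [hset]
      simp
    · -- product = +1
      intro hprod
      have hiin : i ≠ n := by omega
      have hi'n : i' ≠ n := by omega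
      have hjn : j ≠ n := by omega
      have hj'n : j' ≠ n := by omega
      have hp1 : proj1 I = {i, i'} := by
        rw [hIeq]
        ext x
        simp only [proj1, Finset.mem_image, Finset.mem_insert, Finset.mem_singleton]
        constructor
        · rintro ⟨p, hp, rfl⟩
          rcases hp with rfl | rfl | rfl | rfl <;> simp
        · rintro (rfl | rfl)
          · exact ⟨(x, j), Or.inl rfl, rfl⟩
          · exact ⟨(x, j), Or.inr (Or.inr (Or.inl rfl)), rfl⟩
      have hp2 : proj2 I = {j, j'} := by
        rw [hIeq]
        ext x
        simp only [proj2, Finset.mem_image, Finset.mem_insert, Finset.mem_singleton]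
        constructor
        · rintro ⟨p, hp, rfl⟩
          rcases hp with rfl | rfl | rfl | rfl <;> simp
        · rintro (rfl | rfl)
          · exact ⟨(i, x), Or.inl rfl, rfl⟩
          · exact ⟨(i, x), Or.inr (Or.inl rfl), rfl⟩
      have hp1card : (proj1 I).card = 2 := by
        rw [hp1]
        exact Finset.card_pair (by omega)
      have hp2card : (proj2 I).card = 2 := by
        rw [hp2]
        exact Finset.card_pair (by omega)
      have hE0 : (proj1 I).image (fun a => (a, n)) ∪ (proj2 I).image (fun b => (n, b))
          = ({(i,n), (i',n), (n,j), (n,j')} : Finset (ℕ × ℕ)) := by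
        rw [hp1, hp2, Finset.image_insert, Finset.image_singleton, Finset.image_insert,
          Finset.image_singleton, Finset.insert_union,
          (by ext p; simp only [Finset.mem_union, Finset.mem_insert, Finset.mem_singleton] :
            ({(i',n)} : Finset (ℕ × ℕ)) ∪ {(n,j), (n,j')} = {(i',n), (n,j), (n,j')})]
      have hcnt2 : cnt ((proj1 I).image (fun a => (a, n)) ∪ (proj2 I).image (fun b => (n, b)))
          (fun A => ∀ p ∈ I, B p ≠ 0 → A (p.1, n) * A (n, p.2) = -B p) = 2 := by
        rw [hE0]
        rw [cnt_congr (Q := fun A => A (i,n) * A (n,j) = -B (i,j) ∧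
          A (i,n) * A (n,j') = -B (i,j') ∧ A (i',n) * A (n,j) = -B (i',j) ∧
          A (i',n) * A (n,j') = -B (i',j')) ?hiff]
        · exact rect_count n i i' j j' (B (i,j)) (B (i,j')) (B (i',j)) (B (i',j'))
            (by omega) (by omega) hiin hi'n hjn hj'n hs1 hs2 hs3 hs4 hprod
        case hiff =>
          intro A _
          constructor
          · intro h
            exact ⟨h _ m1 (hBnz _ m1), h _ m2 (hBnz _ m2),
              h _ m3 (hBnz _ m3), h _ m4 (hBnz _ m4)⟩
          · rintro ⟨h1, h2, h3, h4⟩ p hp _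
            rw [hIeq] at hp
            rcases Finset.mem_insert.1 hp with rfl | hp
            · exact h1
            rcases Finset.mem_insert.1 hp with rfl | hp
            · exact h2
            rcases Finset.mem_insert.1 hp with rfl | hp
            · exact h3
            rw [Finset.mem_singleton.1 hp]
            exact h4
      have hmain := main_count n I hn hI B hB
      have hc9 : (chioExt n n I).card = 9 := by
        rw [card_chio n I hn1 hI, hk, hp1card, hp2card]
      have h9le : 9 ≤ n ^ 2 := hc9 ▸ hcle
      have hNat : Set.ncard {A | IsSignOn (fullGrid n) A ∧ CondensesTo n n I A B}
          * 2 ^ 7 = 2 ^ (n ^ 2) := by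
        rw [hmain, hcnt2, hc9]
        calc 2 ^ (n ^ 2 - 9) * (2 * 2) * 2 ^ 7 = 2 ^ (n ^ 2 - 9) * 2 ^ 9 := by ring
          _ = 2 ^ (n ^ 2 - 9 + 9) := by rw [← pow_add]
          _ = 2 ^ (n ^ 2) := by rw [Nat.sub_add_cancel h9le]
      have hkey : (Set.ncard {A : ℕ × ℕ → ℤ | IsSignOn (fullGrid n) A ∧
          CondensesTo n n I A B} : ℚ) * 2 ^ 7 = 2 ^ (n ^ 2) := by
        exact_mod_cast hNat
      have hPch : PchioN n I B = (1 / 2 : ℚ) ^ 7 := by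
        unfold PchioN
        rw [div_eq_iff (by positivity : ((2 : ℚ)) ^ (n ^ 2) ≠ 0), div_pow, one_pow,
          div_mul_eq_mul_div, eq_div_iff (by positivity : ((2 : ℚ)) ^ 7 ≠ 0), one_mul]
        exact hkey
      refine ⟨hPch, ?_⟩
      rw [hPch]
      unfold PlcfN
      rw [Finset.filter_true_of_mem hBnz, hk]
      norm_num
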